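/- Every finite 2n-regular graph admits a Schreier structure: there is an orientation of the edges and a labeling of each edge by one of n generators a_1,...,a_n such that every vertex has exactly one outgoing and exactly one incoming edge with each label a_i. -/

import Mathlib

/-- The degree of a vertex in a finite multigraph `ends : E → V × V`
(loops, i.e. edges with equal endpoints, contribute 2). -/
def multigraphDegree {V E : Type*} [Fintype E] [DecidableEq V]
    (ends : E → V × V) (v : V) : ℕ :=
  (Finset.univ.filter fun e => (ends e).1 = v).card
    + (Finset.univ.filter fun e => (ends e).2 = v).card

/-- Counting a filter by `g e ∈ W` fiberwise over `W`. -/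
lemma schreier_count_fiberwise {V E : Type*} [Fintype E] [DecidableEq V]
    (g : E → V) (W : Finset V) :
    (Finset.univ.filter fun e => g e ∈ W).card
      = ∑ v ∈ W, (Finset.univ.filter fun e => g e = v).card := by
  rw [Finset.card_eq_sum_card_fiberwise (f := g) (s := Finset.univ.filter fun e => g e ∈ W) (t := W)
    (fun e he => (Finset.mem_filter.mp he).2)]
  refine Finset.sum_congr rfl (fun v hv => ?_)
  rw [Finset.filter_filter]
  congr 1
  apply Finset.filter_congr
  intro e _
  constructor
  · exact fun h => h.2
  · intro h; exact ⟨h ▸ hv, h⟩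

/-- One perfect matching step: if `t` and `h` both have all fibers of size `n > 0`,
there is a permutation `σ` and an injective choice of edges `m v` with tail `v`
and head `σ v`. -/
lemma schreier_exists_matching_step {V E : Type*} [Fintype V] [Fintype E] [DecidableEq V]
    [DecidableEq E] (n : ℕ) (hn : 0 < n) (t h : E → V)
    (ht : ∀ v, (Finset.univ.filter fun e => t e = v).card = n)
    (hh : ∀ v, (Finset.univ.filter fun e => h e = v).card = n) :
    ∃ (σ : Equiv.Perm V) (m : V → E), Function.Injective m ∧
      ∀ v, t (m v) = v ∧ h (m v) = σ v := by
  set r : V → Finset V := fun v => (Finset.univ.filter fun e => t e = v).image h with hr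
  have hall : ∀ s : Finset V, s.card ≤ (s.biUnion r).card := by
    intro s
    set T := s.biUnion r with hT
    have key1 : (Finset.univ.filter fun e => t e ∈ s).card = n * s.card := by
      rw [schreier_count_fiberwise t s,
        Finset.sum_congr rfl (fun v _ => ht v), Finset.sum_const, smul_eq_mul, mul_comm]
    have key2 : (Finset.univ.filter fun e => h e ∈ T).card = n * T.card := by
      rw [schreier_count_fiberwise h T,
        Finset.sum_congr rfl (fun v _ => hh v), Finset.sum_const, smul_eq_mul, mul_comm]
    have hsub : (Finset.univ.filter fun e => t e ∈ s) ⊆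
        (Finset.univ.filter fun e => h e ∈ T) := by
      intro e he
      simp only [Finset.mem_filter, Finset.mem_univ, true_and] at he ⊢
      rw [hT]
      exact Finset.mem_biUnion.mpr ⟨t e, he, Finset.mem_image.mpr
        ⟨e, Finset.mem_filter.mpr ⟨Finset.mem_univ _, rfl⟩, rfl⟩⟩
    have := Finset.card_le_card hsub
    rw [key1, key2] at this
    exact Nat.le_of_mul_le_mul_left this hn
  obtain ⟨f, finj, hf⟩ := (Finset.all_card_le_biUnion_card_iff_exists_injective r).mp hall
  have fbij : Function.Bijective f := Finite.injective_iff_bijective.mp finj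
  have hm : ∀ v, ∃ e, t e = v ∧ h e = f v := by
    intro v
    have := hf v
    rw [hr] at this
    simp only [Finset.mem_image, Finset.mem_filter, Finset.mem_univ, true_and] at this
    obtain ⟨e, he1, he2⟩ := this
    exact ⟨e, he1, he2⟩
  choose m hm1 hm2 using hm
  refine ⟨Equiv.ofBijective f fbij, m, ?_, fun v => ⟨hm1 v, hm2 v⟩⟩
  intro a b hab
  have := hm1 a
  rw [hab, hm1 b] at this
  exact this.symm

/-- Decomposition of an `n`-regular "bipartite" incidence (tail map `t` and head map `h`,
all fibers of size `n`) into `n` permutations. -/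
lemma schreier_decomp {V : Type*} [Fintype V] [DecidableEq V] :
    ∀ (n : ℕ) (E : Type*) [Fintype E] (t h : E → V),
    (∀ v, (Finset.univ.filter fun e => t e = v).card = n) →
    (∀ v, (Finset.univ.filter fun e => h e = v).card = n) →
    ∃ (σ : Fin n → Equiv.Perm V) (β : Fin n × V ≃ E),
      ∀ (i : Fin n) (x : V), t (β (i, x)) = x ∧ h (β (i, x)) = σ i x := by
  intro n
  induction n with
  | zero =>
    intro E _ t h ht hh
    have : IsEmpty E := by
      constructor
      intro e
      have hmem : e ∈ Finset.univ.filter fun e' => t e' = t e :=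
        Finset.mem_filter.mpr ⟨Finset.mem_univ _, rfl⟩
      have hc := ht (t e)
      rw [Finset.card_eq_zero] at hc
      rw [hc] at hmem
      exact absurd hmem (Finset.notMem_empty e)
    exact ⟨fun i => i.elim0, Equiv.equivOfIsEmpty _ _, fun i => i.elim0⟩
  | succ n ih =>
    intro E _ t h ht hh
    classical
    obtain ⟨σ0, m, minj, hm⟩ :=
      schreier_exists_matching_step (n + 1) (Nat.succ_pos n) t h ht hh
    set E' := {e : E // e ∉ Set.range m} with hE'
    have fib : ∀ (g : E → V) (p : Equiv.Perm V), (∀ v, g (m v) = p v) →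
        (∀ v, (Finset.univ.filter fun e : E => g e = v).card = n + 1) →
        ∀ v, (Finset.univ.filter fun e : E' => g e.1 = v).card = n := by
      intro g p hp hg v
      have hmem : m (p.symm v) ∈ Finset.univ.filter fun e : E => g e = v := by
        simp only [Finset.mem_filter, Finset.mem_univ, true_and]
        rw [hp, Equiv.apply_symm_apply]
      have hcard : ((Finset.univ.filter fun e : E => g e = v).erase (m (p.symm v))).card
          = n := by
        rw [Finset.card_erase_of_mem hmem, hg v]
        omega
      rw [← hcard]
      apply Finset.card_bij (fun (e : E') _ => e.1)
      · intro e he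
        simp only [Finset.mem_filter, Finset.mem_univ, true_and] at he
        refine Finset.mem_erase.mpr ⟨?_, Finset.mem_filter.mpr ⟨Finset.mem_univ _, he⟩⟩
        intro hc
        exact e.2 ⟨p.symm v, hc.symm⟩
      · intro a _ b _ hab
        exact Subtype.ext hab
      · intro a ha
        rw [Finset.mem_erase, Finset.mem_filter] at ha
        have harange : a ∉ Set.range m := by
          rintro ⟨w, rfl⟩
          apply ha.1
          congr 1
          have : p w = v := by rw [← hp w, ha.2.2]
          rw [← this, Equiv.symm_apply_apply]
        exact ⟨⟨a, harange⟩, Finset.mem_filter.mpr ⟨Finset.mem_univ _, ha.2.2⟩, rfl⟩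
    have ht' := fib t 1 (fun v => (hm v).1) ht
    have hh' := fib h σ0 (fun v => (hm v).2) hh
    obtain ⟨σ', β', hβ'⟩ := ih E' (fun e => t e.1) (fun e => h e.1) ht' hh'
    set f : Fin (n + 1) × V → E := fun p =>
      if hp : p.1.val = 0 then m p.2 else (β' (⟨p.1.val - 1, by omega⟩, p.2)).1 with hf
    have finj : Function.Injective f := by
      rintro ⟨i, x⟩ ⟨j, y⟩ hxy
      simp only [hf] at hxy
      by_cases hi : i.val = 0 <;> by_cases hj : j.val = 0
      · rw [dif_pos hi, dif_pos hj] at hxy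
        have := minj hxy
        subst this
        rw [Prod.mk.injEq]
        exact ⟨Fin.ext (hi.trans hj.symm), rfl⟩
      · rw [dif_pos hi, dif_neg hj] at hxy
        exact absurd ⟨x, hxy⟩ (β' (⟨j.val - 1, by omega⟩, y)).2
      · rw [dif_neg hi, dif_pos hj] at hxy
        exact absurd ⟨y, hxy.symm⟩ (β' (⟨i.val - 1, by omega⟩, x)).2
      · rw [dif_neg hi, dif_neg hj] at hxy
        have := β'.injective (Subtype.ext hxy)
        rw [Prod.mk.injEq, Fin.mk.injEq] at this
        rw [Prod.mk.injEq]
        refine ⟨Fin.ext ?_, this.2⟩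
        have := this.1
        omega
    have fsurj : Function.Surjective f := by
      intro e
      by_cases he : e ∈ Set.range m
      · obtain ⟨v, rfl⟩ := he
        exact ⟨(⟨0, Nat.succ_pos n⟩, v), by simp [hf]⟩
      · obtain ⟨⟨i, x⟩, hix⟩ := β'.surjective ⟨e, he⟩
        refine ⟨(⟨i.val + 1, by omega⟩, x), ?_⟩
        simp only [hf, dif_neg (Nat.succ_ne_zero i.val), Nat.add_sub_cancel]
        rw [show (⟨i.val, by omega⟩ : Fin n) = i from Fin.ext rfl, hix]
    set σ : Fin (n + 1) → Equiv.Perm V := fun i =>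
      if hi : i.val = 0 then σ0 else σ' ⟨i.val - 1, by omega⟩ with hσ
    refine ⟨σ, Equiv.ofBijective f ⟨finj, fsurj⟩, ?_⟩
    intro i x
    simp only [Equiv.ofBijective_apply, hf, hσ]
    by_cases hi : i.val = 0
    · rw [dif_pos hi, dif_pos hi]
      exact hm x
    · rw [dif_neg hi, dif_neg hi]
      exact hβ' ⟨i.val - 1, by omega⟩ x

/-- every finite `2n`-regular multigraph admits a Schreier structure:
there are `n` permutations `σ 1, …, σ n` of the vertex set whose functional graphs
partition the edge set.  Equivalently (via the bijection `β`), each edge receives an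
orientation and a label `i ∈ {1,…,n}` so that every vertex has exactly one outgoing
and exactly one incoming edge with each label: the edge `β (i, x)` is oriented from
`x` to `σ i x`. -/
theorem finite_regular_admits_schreier_structure {V E : Type*} [Fintype V] [Fintype E]
    [DecidableEq V] (n : ℕ) (ends : E → V × V)
    (hreg : ∀ v : V, multigraphDegree ends v = 2 * n) :
    ∃ (σ : Fin n → Equiv.Perm V) (β : Fin n × V ≃ E),
      ∀ (i : Fin n) (x : V),
        ends (β (i, x)) = (x, σ i x) ∨ ends (β (i, x)) = (σ i x, x) := by
  classical
  -- Step 1: Eulerian orientation via Hall's theorem: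
  -- an injection `E → V × Fin n` sending each edge to one of its endpoints.
  set r : E → Finset (V × Fin n) := fun e =>
    ({(ends e).1, (ends e).2} : Finset V) ×ˢ (Finset.univ : Finset (Fin n)) with hr
  have hall : ∀ s : Finset E, s.card ≤ (s.biUnion r).card := by
    intro s
    set W := s.biUnion (fun e => ({(ends e).1, (ends e).2} : Finset V)) with hW
    have hbi : s.biUnion r = W ×ˢ (Finset.univ : Finset (Fin n)) := by
      ext ⟨v, i⟩
      simp only [hr, Finset.mem_biUnion, Finset.mem_product, hW, Finset.mem_univ, and_true]
    rw [hbi, Finset.card_product, Finset.card_univ, Fintype.card_fin]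
    have h1 : s.card ≤ (Finset.univ.filter fun e => (ends e).1 ∈ W).card := by
      apply Finset.card_le_card
      intro e he
      simp only [Finset.mem_filter, Finset.mem_univ, true_and, hW, Finset.mem_biUnion]
      exact ⟨e, he, Finset.mem_insert_self _ _⟩
    have h2 : s.card ≤ (Finset.univ.filter fun e => (ends e).2 ∈ W).card := by
      apply Finset.card_le_card
      intro e he
      simp only [Finset.mem_filter, Finset.mem_univ, true_and, hW, Finset.mem_biUnion]
      exact ⟨e, he, Finset.mem_insert_of_mem (Finset.mem_singleton_self _)⟩
    have hsum : (Finset.univ.filter fun e => (ends e).1 ∈ W).card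
        + (Finset.univ.filter fun e => (ends e).2 ∈ W).card = 2 * n * W.card := by
      rw [schreier_count_fiberwise (fun e => (ends e).1) W,
        schreier_count_fiberwise (fun e => (ends e).2) W, ← Finset.sum_add_distrib]
      have hdeg : ∀ v ∈ W, ((Finset.univ.filter fun e => (ends e).1 = v).card
          + (Finset.univ.filter fun e => (ends e).2 = v).card) = 2 * n := fun v _ => hreg v
      rw [Finset.sum_congr rfl hdeg, Finset.sum_const, smul_eq_mul, mul_comm]
    have key : s.card + s.card ≤ 2 * n * W.card := hsum ▸ Nat.add_le_add h1 h2
    have key2 : 2 * s.card ≤ 2 * (W.card * n) := by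
      rw [show 2 * (W.card * n) = 2 * n * W.card from by ring]
      omega
    exact Nat.le_of_mul_le_mul_left key2 two_pos
  obtain ⟨f, finj, hf⟩ := (Finset.all_card_le_biUnion_card_iff_exists_injective r).mp hall
  have hfmem : ∀ e, (f e).1 = (ends e).1 ∨ (f e).1 = (ends e).2 := by
    intro e
    have := hf e
    rw [hr, Finset.mem_product] at this
    have := this.1
    rw [Finset.mem_insert, Finset.mem_singleton] at this
    exact this
  -- cardinality: |E| = n * |V|, so `f` is bijective
  have hcard2 : 2 * Fintype.card E = 2 * n * Fintype.card V := by
    have e1 : Fintype.card E = ∑ v : V, (Finset.univ.filter fun e => (ends e).1 = v).card := by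
      rw [← Finset.card_univ,
        Finset.card_eq_sum_card_fiberwise (f := fun e => (ends e).1) (t := Finset.univ)
          (fun e _ => Finset.mem_univ _)]
    have e2 : Fintype.card E = ∑ v : V, (Finset.univ.filter fun e => (ends e).2 = v).card := by
      rw [← Finset.card_univ,
        Finset.card_eq_sum_card_fiberwise (f := fun e => (ends e).2) (t := Finset.univ)
          (fun e _ => Finset.mem_univ _)]
    have hthis : ∑ v : V, multigraphDegree ends v
        = Fintype.card E + Fintype.card E := by
      simp only [multigraphDegree]
      rw [Finset.sum_add_distrib, ← e1, ← e2]
    have h2' : ∑ v : V, multigraphDegree ends v = Fintype.card V * (2 * n) := by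
      rw [Finset.sum_congr rfl (fun v _ => hreg v), Finset.sum_const, smul_eq_mul,
        Finset.card_univ]
    calc 2 * Fintype.card E = Fintype.card E + Fintype.card E := by ring
      _ = ∑ v : V, multigraphDegree ends v := hthis.symm
      _ = Fintype.card V * (2 * n) := h2'
      _ = 2 * n * Fintype.card V := by ring
  have hcardeq : Fintype.card E = Fintype.card (V × Fin n) := by
    rw [Fintype.card_prod, Fintype.card_fin]
    have : 2 * (Fintype.card V * n) = 2 * n * Fintype.card V := by ring
    omega
  have fbij : Function.Bijective f :=
    (Fintype.bijective_iff_injective_and_card f).mpr ⟨finj, hcardeq⟩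
  -- Step 2: tail and head maps
  set t : E → V := fun e => (f e).1 with htdef
  set h : E → V := fun e =>
    if (f e).1 = (ends e).1 then (ends e).2 else (ends e).1 with hhdef
  have ht : ∀ v, (Finset.univ.filter fun e => t e = v).card = n := by
    intro v
    have : (Finset.univ.filter fun e => t e = v).card
        = (({v} : Finset V) ×ˢ (Finset.univ : Finset (Fin n))).card := by
      apply Finset.card_bij (fun e _ => f e)
      · intro e he
        simp only [Finset.mem_filter, Finset.mem_univ, true_and, htdef] at he
        rw [Finset.mem_product, Finset.mem_singleton]
        exact ⟨he, Finset.mem_univ _⟩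
      · intro a _ b _ hab
        exact finj hab
      · intro p hp
        obtain ⟨e, rfl⟩ := fbij.2 p
        rw [Finset.mem_product, Finset.mem_singleton] at hp
        exact ⟨e, Finset.mem_filter.mpr ⟨Finset.mem_univ _, hp.1⟩, rfl⟩
    rw [this, Finset.card_product, Finset.card_singleton, Finset.card_univ,
      Fintype.card_fin, one_mul]
  have hpoint : ∀ (v : V) (e : E),
      (if t e = v then 1 else 0) + (if h e = v then 1 else 0)
        = (if (ends e).1 = v then 1 else 0) + (if (ends e).2 = v then 1 else 0) := by
    intro v e
    simp only [htdef, hhdef]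
    by_cases hte : (f e).1 = (ends e).1
    · rw [if_pos hte, hte]
    · have hte2 : (f e).1 = (ends e).2 := (hfmem e).resolve_left hte
      rw [if_neg hte, hte2]
      exact Nat.add_comm _ _
  have hh : ∀ v, (Finset.univ.filter fun e => h e = v).card = n := by
    intro v
    have hsum : (Finset.univ.filter fun e => t e = v).card
        + (Finset.univ.filter fun e => h e = v).card = multigraphDegree ends v := by
      simp only [multigraphDegree, Finset.card_filter]
      rw [← Finset.sum_add_distrib, ← Finset.sum_add_distrib]
      exact Finset.sum_congr rfl (fun e _ => hpoint v e)
    rw [ht v, hreg v] at hsum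
    omega
  -- Step 3: decompose into n permutations
  obtain ⟨σ, β, hβ⟩ := schreier_decomp n E t h ht hh
  refine ⟨σ, β, fun i x => ?_⟩
  obtain ⟨h1, h2⟩ := hβ i x
  by_cases hte : (f (β (i, x))).1 = (ends (β (i, x))).1
  · left
    have he1 : (ends (β (i, x))).1 = x := by rw [← hte]; exact h1
    have he2 : (ends (β (i, x))).2 = σ i x := by
      rw [← h2]
      simp only [hhdef]
      rw [if_pos hte]
    exact Prod.ext_iff.mpr ⟨he1, he2⟩
  · right
    have hte2 : (f (β (i, x))).1 = (ends (β (i, x))).2 := (hfmem _).resolve_left hte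
    have he2 : (ends (β (i, x))).2 = x := by rw [← hte2]; exact h1
    have he1 : (ends (β (i, x))).1 = σ i x := by
      rw [← h2]
      simp only [hhdef]
      rw [if_neg hte]
    exact Prod.ext_iff.mpr ⟨he1, he2⟩
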